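/- Let Φ be an admissible DGF, k₃ > 0, (a,b) ⊆ ℝ a possibly unbounded interval, and h : (a,b) → ℝ continuously differentiable with h'(τ) ≥ α h(τ) > 0 for all τ ∈ (a,b) and some α ∈ ℝ. Then ∫_a^b Ψ'(h(τ)) dτ ≤ (1/(k₃α)) ∫_{Φ⁻¹(k₃ h(a))}^{Φ⁻¹(k₃ h(b))} 1/Φ(x) dx, where Ψ = Φ_{k₃}⁻¹. -/

import Mathlib

open Filter Set
open MeasureTheory

/-- Definition 2: Differentiator Generating Function. -/
structure IsDGF (Φ : ℝ → ℝ) : Prop where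
  continuous : Continuous Φ
  odd : ∀ x, Φ (-x) = -Φ x
  diff : ∀ x ≠ 0, DifferentiableAt ℝ Φ x
  diff' : ∀ x ≠ 0, DifferentiableAt ℝ (deriv Φ) x
  cont' : ContinuousOn (deriv Φ) {(0:ℝ)}ᶜ
  cont'' : ContinuousOn (deriv (deriv Φ)) {(0:ℝ)}ᶜ
  pos : ∀ x ≠ 0, 0 < deriv Φ x
  blowup : Tendsto (fun x => |deriv Φ x|) (nhdsWithin 0 {(0:ℝ)}ᶜ) atTop
  ratio : Tendsto (fun x => |2 * (deriv Φ x)^3 / deriv (deriv Φ) x|)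
      (nhdsWithin 0 {(0:ℝ)}ᶜ) (nhds 1)

/-- Definition 3: admissible DGF with constants B, C, D. -/
structure IsAdmissibleDGF (Φ : ℝ → ℝ) (B C D : ℝ) extends IsDGF Φ : Prop where
  strictMono : StrictMono Φ
  bijective : Function.Bijective Φ
  B_pos : 0 < B
  C_pos : 0 < C
  D_ge_one : 1 ≤ D
  integral : (∫ x in Set.Ioi (0:ℝ), 1 / (B * Φ x)) ≤ 1
  deriv_lb : ∀ x ≠ 0, 1 ≤ C * deriv Φ x
  growth : ∀ x ≠ 0, |deriv (deriv Φ) x| ≤ 2 * D * |deriv Φ x|^3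

private lemma dgf_sqrt_bound {Φ : ℝ → ℝ} {B C D : ℝ} (hΦ : IsAdmissibleDGF Φ B C D) :
    ∃ δ > 0, ∀ x ∈ Set.Ioc (0:ℝ) δ, Real.sqrt x / 3 ≤ Φ x := by
  have hΦ0 : Φ 0 = 0 := by have := hΦ.odd 0; simp at this; linarith
  set f := deriv Φ with hfdef
  have hsub : Set.Ioi (0:ℝ) ⊆ {(0:ℝ)}ᶜ := fun x hx => ne_of_gt hx
  have hmono : nhdsWithin (0:ℝ) (Set.Ioi 0) ≤ nhdsWithin (0:ℝ) {(0:ℝ)}ᶜ :=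
    nhdsWithin_mono 0 hsub
  have h1 : ∀ᶠ x in nhdsWithin (0:ℝ) (Set.Ioi 0), (1:ℝ)/2 < |2 * f x ^ 3 / deriv f x| :=
    (hΦ.ratio.eventually (eventually_gt_nhds (by norm_num))).filter_mono hmono
  obtain ⟨δ₀, hδ₀pos, hδ₀⟩ : ∃ δ₀ > (0:ℝ), ∀ x ∈ Set.Ioo (0:ℝ) δ₀,
      (1:ℝ)/2 < |2 * f x ^ 3 / deriv f x| := by
    rcases mem_nhdsGT_iff_exists_Ioo_subset.mp h1 with ⟨u, hu, hsubu⟩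
    exact ⟨u, hu, fun x hx => hsubu hx⟩
  -- G tends to 0
  set G : ℝ → ℝ := fun x => ((f x) ^ 2)⁻¹ with hGdef
  have hGlim : Tendsto G (nhdsWithin (0:ℝ) (Set.Ioi 0)) (nhds 0) := by
    have hb : Tendsto (fun x => |f x|) (nhdsWithin (0:ℝ) (Set.Ioi 0)) atTop :=
      hΦ.blowup.mono_left hmono
    have h2 : Tendsto (fun x => |f x| ^ 2) (nhdsWithin (0:ℝ) (Set.Ioi 0)) atTop :=
      (tendsto_pow_atTop (two_ne_zero)).comp hb
    have := h2.inv_tendsto_atTop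
    simpa [hGdef, sq_abs, Pi.inv_def] using this
  -- derivative of G and bound
  have hG' : ∀ x ∈ Set.Ioo (0:ℝ) δ₀,
      HasDerivAt G (-(↑2 * f x ^ 1 * deriv f x) / ((f x) ^ 2) ^ 2) x := by
    intro x hx
    have hxne : x ≠ 0 := ne_of_gt hx.1
    have h0 : HasDerivAt f (deriv f x) x := (hΦ.diff' x hxne).hasDerivAt
    have h2 : HasDerivAt (fun x => (f x) ^ 2) (↑2 * f x ^ 1 * deriv f x) x := h0.pow 2
    exact h2.inv (pow_ne_zero 2 (ne_of_gt (hΦ.pos x hxne)))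
  have hGbound : ∀ x ∈ Set.Ioo (0:ℝ) δ₀,
      ‖-(↑2 * f x ^ 1 * deriv f x) / ((f x) ^ 2) ^ 2‖ ≤ 8 := by
    intro x hx
    have hxne : x ≠ 0 := ne_of_gt hx.1
    have hfx : 0 < f x := hΦ.pos x hxne
    have habs : |deriv f x| ≤ 4 * f x ^ 3 := by
      rcases eq_or_ne (deriv f x) 0 with hz | hz
      · rw [hz, abs_zero]; positivity
      · have h3 := hδ₀ x hx
        rw [abs_div, abs_of_pos (by positivity : (0:ℝ) < 2 * f x ^ 3)] at h3
        rw [lt_div_iff₀ (abs_pos.mpr hz)] at h3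
        nlinarith [abs_nonneg (deriv f x)]
    rw [Real.norm_eq_abs, abs_div, abs_neg, abs_of_pos (by positivity : (0:ℝ) < (f x ^2)^2),
      div_le_iff₀ (by positivity : (0:ℝ) < (f x ^2)^2)]
    have : |↑2 * f x ^ 1 * deriv f x| = 2 * f x * |deriv f x| := by
      rw [abs_mul, abs_of_pos (by positivity : (0:ℝ) < 2 * f x ^ 1)]; ring_nf
    rw [this]
    nlinarith [abs_nonneg (deriv f x)]
  have hGle : ∀ x ∈ Set.Ioo (0:ℝ) δ₀, G x ≤ 8 * x := by
    intro x hx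
    have key : ∀ y ∈ Set.Ioo (0:ℝ) x, G x ≤ G y + 8 * x := by
      intro y hy
      have hy' : y ∈ Set.Ioo (0:ℝ) δ₀ := ⟨hy.1, lt_trans hy.2 hx.2⟩
      have := (convex_Ioo (0:ℝ) δ₀).norm_image_sub_le_of_norm_hasDerivWithin_le
        (fun z hz => (hG' z hz).hasDerivWithinAt) hGbound hy' hx
      rw [Real.norm_eq_abs, Real.norm_eq_abs] at this
      have h4 : G x - G y ≤ 8 * |x - y| := (abs_le.mp this).2.trans_eq rfl
      have h5 : |x - y| ≤ x := by rw [abs_of_pos (by linarith [hy.2] : (0:ℝ) < x - y)]; linarith [hy.1]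
      nlinarith
    have htend : Tendsto (fun y => G y + 8 * x) (nhdsWithin (0:ℝ) (Set.Ioi 0)) (nhds (0 + 8 * x)) :=
      hGlim.add_const _
    have hev : ∀ᶠ y in nhdsWithin (0:ℝ) (Set.Ioi 0), G x ≤ G y + 8 * x := by
      filter_upwards [Ioo_mem_nhdsGT hx.1] with y hy using key y hy
    have := ge_of_tendsto htend hev
    linarith
  have hf_lb : ∀ x ∈ Set.Ioo (0:ℝ) δ₀, (Real.sqrt (8 * x))⁻¹ ≤ f x := by
    intro x hx
    have hfx : 0 < f x := hΦ.pos x (ne_of_gt hx.1)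
    have h8x : (0:ℝ) < 8 * x := by linarith [hx.1]
    have h1 : (8 * x)⁻¹ ≤ f x ^ 2 := by
      have hG := hGle x hx
      have h2 : (0:ℝ) < f x ^ 2 := by positivity
      have h3 : f x ^ 2 * (f x ^ 2)⁻¹ = 1 := mul_inv_cancel₀ (ne_of_gt h2)
      have hG2 : (f x ^ 2)⁻¹ ≤ 8 * x := by simpa [hGdef] using hG
      have h5 : 1 ≤ 8 * x * f x ^ 2 := by
        nlinarith [mul_le_mul_of_nonneg_left hG2 h2.le]
      have h6 := mul_le_mul_of_nonneg_left h5 (inv_nonneg.mpr h8x.le)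
      rwa [mul_one, ← mul_assoc, inv_mul_cancel₀ (ne_of_gt h8x), one_mul] at h6
    calc (Real.sqrt (8*x))⁻¹ = Real.sqrt ((8*x)⁻¹) := (Real.sqrt_inv _).symm
      _ ≤ Real.sqrt (f x ^ 2) := Real.sqrt_le_sqrt h1
      _ = f x := Real.sqrt_sq hfx.le
  have hΦ_lb : ∀ x ∈ Set.Ioo (0:ℝ) δ₀, x * (Real.sqrt (8 * x))⁻¹ ≤ Φ x := by
    intro x hx
    set c := (Real.sqrt (8 * x))⁻¹ with hcdef
    have hkey : ∀ y ∈ Set.Ioo (0:ℝ) x, c * x - c * y ≤ Φ x := by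
      intro y hy
      have hy' : y ∈ Set.Ioo (0:ℝ) δ₀ := ⟨hy.1, lt_trans hy.2 hx.2⟩
      have hmon : MonotoneOn (fun t => Φ t - c * t) (Set.Icc y x) := by
        apply monotoneOn_of_deriv_nonneg (convex_Icc y x)
        · exact (hΦ.continuous.continuousOn.sub (continuousOn_const.mul continuousOn_id))
        · intro t ht
          rw [interior_Icc] at ht
          have htne : t ≠ 0 := ne_of_gt (lt_trans hy.1 ht.1)
          exact ((hΦ.diff t htne).sub ((differentiable_id.const_mul c) t)).differentiableWithinAt
        · intro t ht
          rw [interior_Icc] at ht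
          have htne : t ≠ 0 := ne_of_gt (lt_trans hy.1 ht.1)
          have hd : HasDerivAt (fun t => Φ t - c * t) (f t - c * 1) t :=
            (hΦ.diff t htne).hasDerivAt.sub ((hasDerivAt_id t).const_mul c)
          rw [hd.deriv]
          have ht' : t ∈ Set.Ioo (0:ℝ) δ₀ := ⟨lt_trans hy.1 ht.1, lt_trans ht.2 hx.2⟩
          have h6 : c ≤ (Real.sqrt (8 * t))⁻¹ := by
            rw [hcdef]
            apply inv_anti₀
            · exact Real.sqrt_pos.mpr (by linarith [ht'.1])
            · exact Real.sqrt_le_sqrt (by linarith [ht.2])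
          have := hf_lb t ht'
          simp only [mul_one]
          linarith
      have h7 := hmon (Set.left_mem_Icc.mpr hy.2.le) (Set.right_mem_Icc.mpr hy.2.le) hy.2.le
      have hΦy : 0 < Φ y := by
        have := hΦ.strictMono hy.1
        rwa [hΦ0] at this
      simp only at h7
      linarith
    have htend : Tendsto (fun y => c * x - c * y) (nhdsWithin (0:ℝ) (Set.Ioi 0))
        (nhds (c * x - c * 0)) := by
      apply Tendsto.sub tendsto_const_nhds
      exact (tendsto_const_nhds.mul (Filter.tendsto_id.mono_left nhdsWithin_le_nhds))
    have hev : ∀ᶠ y in nhdsWithin (0:ℝ) (Set.Ioi 0), c * x - c * y ≤ Φ x := by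
      filter_upwards [Ioo_mem_nhdsGT hx.1] with y hy using hkey y hy
    have := le_of_tendsto htend hev
    simp only [mul_zero, sub_zero] at this
    linarith [this, mul_comm c x ▸ this]
  refine ⟨δ₀ / 2, by linarith, fun x hx => ?_⟩
  have hx' : x ∈ Set.Ioo (0:ℝ) δ₀ := ⟨hx.1, lt_of_le_of_lt hx.2 (by linarith)⟩
  have h8 := hΦ_lb x hx'
  have h10 : Real.sqrt 8 ≤ 3 := by
    rw [show (3:ℝ) = Real.sqrt 9 by rw [show (9:ℝ) = 3^2 by norm_num, Real.sqrt_sq]; norm_num]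
    exact Real.sqrt_le_sqrt (by norm_num)
  have h8x' : (0:ℝ) < 8 * x := by linarith [hx.1]
  have hs8x : 0 < Real.sqrt (8*x) := Real.sqrt_pos.mpr h8x'
  have h9 : Real.sqrt x / 3 ≤ x * (Real.sqrt (8 * x))⁻¹ := by
    rw [← div_eq_mul_inv, div_le_div_iff₀ (by norm_num : (0:ℝ) < 3) hs8x]
    have he : Real.sqrt x * Real.sqrt (8*x) = Real.sqrt 8 * x := by
      rw [← Real.sqrt_mul hx.1.le, show x * (8*x) = 8 * x^2 by ring,
        Real.sqrt_mul (by norm_num : (0:ℝ) ≤ 8), Real.sqrt_sq hx.1.le]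
    rw [he]
    nlinarith [hx.1]
  linarith


private lemma dgf_pos {Φ : ℝ → ℝ} {B C D : ℝ} (hΦ : IsAdmissibleDGF Φ B C D)
    {x : ℝ} (hx : 0 < x) : 0 < Φ x := by
  have hΦ0 : Φ 0 = 0 := by have := hΦ.odd 0; simp at this; linarith
  have := hΦ.strictMono hx
  rwa [hΦ0] at this

private lemma dgf_integrableOn_Ioc {Φ : ℝ → ℝ} {B C D : ℝ} (hΦ : IsAdmissibleDGF Φ B C D)
    (M : ℝ) : IntegrableOn (fun x => 1 / Φ x) (Set.Ioc 0 M) volume := by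
  obtain ⟨δ, hδ, hsq⟩ := dgf_sqrt_bound hΦ
  rcases le_or_gt M 0 with hM | hM
  · rw [Set.Ioc_eq_empty (by intro hlt; exact absurd (lt_of_lt_of_le hlt hM) (lt_irrefl 0))]
    exact integrableOn_empty
  set m := min δ M with hm
  have hm0 : 0 < m := lt_min hδ hM
  have hpc1 : IntegrableOn (fun x => 1 / Φ x) (Set.Ioc 0 m) volume := by
    have hdom : IntegrableOn (fun x : ℝ => 3 * x ^ (-(1/2) : ℝ)) (Set.Ioc 0 m) volume := by
      have h1 := (intervalIntegral.intervalIntegrable_rpow'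
        (show (-1:ℝ) < -(1/2) by norm_num) (a := 0) (b := m))
      have h2 : IntervalIntegrable (fun x : ℝ => 3 * x ^ (-(1/2):ℝ)) volume 0 m :=
        h1.const_mul 3
      exact (intervalIntegrable_iff_integrableOn_Ioc_of_le hm0.le).mp h2
    apply MeasureTheory.Integrable.mono hdom
    · apply ContinuousOn.aestronglyMeasurable _ measurableSet_Ioc
      exact continuousOn_const.div hΦ.continuous.continuousOn
        (fun x hx => ne_of_gt (dgf_pos hΦ hx.1))
    · rw [ae_restrict_iff' measurableSet_Ioc]
      apply ae_of_all
      intro x hx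
      have hx' : x ∈ Set.Ioc 0 δ := ⟨hx.1, hx.2.trans (min_le_left _ _)⟩
      have hsx : 0 < Real.sqrt x := Real.sqrt_pos.mpr hx.1
      have hΦx : Real.sqrt x / 3 ≤ Φ x := hsq x hx'
      have hΦxpos : 0 < Φ x := lt_of_lt_of_le (by positivity) hΦx
      have h3 : 1 / Φ x ≤ 3 / Real.sqrt x := by
        have := one_div_le_one_div_of_le (by positivity : (0:ℝ) < Real.sqrt x / 3) hΦx
        rwa [one_div_div] at this
      have h4 : (3:ℝ) / Real.sqrt x = 3 * x ^ (-(1/2):ℝ) := by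
        rw [Real.rpow_neg hx.1.le, ← Real.sqrt_eq_rpow, div_eq_mul_inv]
      rw [Real.norm_eq_abs, Real.norm_eq_abs, abs_of_pos (by positivity : (0:ℝ) < 1 / Φ x),
        abs_of_pos (by rw [← h4]; positivity)]
      rw [← h4]; exact h3
  have hpc2 : IntegrableOn (fun x => 1 / Φ x) (Set.Ioc m M) volume := by
    have hcont : ContinuousOn (fun x => 1 / Φ x) (Set.Icc m M) :=
      continuousOn_const.div hΦ.continuous.continuousOn
        (fun x hx => ne_of_gt (dgf_pos hΦ (lt_of_lt_of_le hm0 hx.1)))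
    exact (hcont.integrableOn_Icc).mono_set Set.Ioc_subset_Icc_self
  have hun : Set.Ioc (0:ℝ) m ∪ Set.Ioc m M = Set.Ioc 0 M :=
    Set.Ioc_union_Ioc_eq_Ioc hm0.le (min_le_right δ M)
  rw [← hun]
  exact hpc1.union hpc2

private lemma dgf_integrableOn_Icc_neg {Φ : ℝ → ℝ} {B C D : ℝ} (hΦ : IsAdmissibleDGF Φ B C D)
    (M : ℝ) : IntegrableOn (fun x => 1 / Φ x) (Set.Icc M 0) volume := by
  rcases le_or_gt M 0 with hM | hM
  swap
  · rw [Set.Icc_eq_empty (by intro hle; linarith)]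
    exact integrableOn_empty
  have h1 : IntervalIntegrable (fun x => 1 / Φ x) volume 0 (-M) :=
    (intervalIntegrable_iff_integrableOn_Ioc_of_le (by linarith)).mpr (dgf_integrableOn_Ioc hΦ (-M))
  have hfun : (fun x : ℝ => 1 / Φ (-x)) = fun x => -(1 / Φ x) := by
    funext x; rw [hΦ.odd x, div_neg]
  have h3 : IntervalIntegrable (fun x : ℝ => 1 / Φ (-x)) volume (-M) (-0) := by
    rw [neg_zero, hfun]
    exact h1.neg.symm
  have h5 : IntervalIntegrable (fun x => 1 / Φ x) volume M 0 :=
    (IntervalIntegrable.iff_comp_neg (f := fun x => 1 / Φ x)).mpr h3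
  have hIoc : IntegrableOn (fun x => 1 / Φ x) (Set.Ioc M 0) volume :=
    (intervalIntegrable_iff_integrableOn_Ioc_of_le hM).mp h5
  have hsing : IntegrableOn (fun x => 1 / Φ x) {M} volume := by
    have h0 : (volume.restrict ({M} : Set ℝ)) = 0 := by
      rw [Measure.restrict_eq_zero]; exact measure_singleton M
    rw [IntegrableOn, h0]
    exact integrable_zero_measure
  apply (hIoc.union hsing).mono_set
  intro x hx
  rcases eq_or_lt_of_le hx.1 with he | hlt
  · exact Or.inr (by simp [← he])
  · exact Or.inl ⟨hlt, hx.2⟩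

set_option maxHeartbeats 1000000 in
theorem stmt_11 (Φ : ℝ → ℝ) (B C D : ℝ) (hΦ : IsAdmissibleDGF Φ B C D)
    (k₃ : ℝ) (hk₃ : 0 < k₃)
    (Ψ : ℝ → ℝ) (hΨ : Ψ = Function.invFun (fun x => k₃⁻¹ * Φ (k₃^2 * x)))
    (a b α : ℝ) (hab : a < b) (h : ℝ → ℝ)
    (hdiff : ∀ τ ∈ Set.Ioo a b, DifferentiableAt ℝ h τ)
    (hcont : ContinuousOn (deriv h) (Set.Ioo a b))
    (hineq : ∀ τ ∈ Set.Ioo a b, α * h τ ≤ deriv h τ ∧ 0 < α * h τ)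
    (ha hb : ℝ)
    (hlima : Tendsto h (nhdsWithin a (Set.Ioi a)) (nhds ha))
    (hlimb : Tendsto h (nhdsWithin b (Set.Iio b)) (nhds hb)) :
    (∫ τ in Set.Ioo a b, deriv Ψ (h τ)) ≤
      (1/(k₃ * α)) * ∫ x in (Function.invFun Φ (k₃ * ha))..(Function.invFun Φ (k₃ * hb)),
        1 / Φ x := by
  have hΦ0 : Φ 0 = 0 := by have := hΦ.odd 0; simp at this; linarith
  have hk₃ne : k₃ ≠ 0 := ne_of_gt hk₃
  set invΦ := Function.invFun Φ with hinvΦdef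
  have hsurj := hΦ.bijective.surjective
  have hinj := hΦ.bijective.injective
  have hΦinv : ∀ y, Φ (invΦ y) = y := fun y => Function.invFun_eq (hsurj y)
  have hinvΦ : ∀ x, invΦ (Φ x) = x := fun x => Function.leftInverse_invFun hinj x
  set e : ℝ ≃o ℝ := StrictMono.orderIsoOfSurjective Φ hΦ.strictMono hsurj with he
  have hinv_eq : invΦ = fun y => e.symm y := by
    funext y
    apply hinj
    rw [hΦinv y]
    exact (StrictMono.orderIsoOfSurjective_self_symm_apply Φ hΦ.strictMono hsurj y).symm
  have hinv_cont : Continuous invΦ := by rw [hinv_eq]; exact e.symm.continuous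
  have hinv_mono : StrictMono invΦ := by rw [hinv_eq]; exact e.symm.strictMono
  have hinv0 : invΦ 0 = 0 := by
    conv_lhs => rw [← hΦ0]
    exact hinvΦ 0
  have hinv_ne : ∀ y : ℝ, y ≠ 0 → invΦ y ≠ 0 := by
    intro y hy h0
    exact hy (by rw [← hΦinv y, h0, hΦ0])
  have hinv_deriv : ∀ y : ℝ, y ≠ 0 → HasDerivAt invΦ (deriv Φ (invΦ y))⁻¹ y := by
    intro y hy
    exact HasDerivAt.of_local_left_inverse hinv_cont.continuousAt
      ((hΦ.diff _ (hinv_ne y hy)).hasDerivAt) (ne_of_gt (hΦ.pos _ (hinv_ne y hy)))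
      (Eventually.of_forall hΦinv)
  -- Ψ formula
  have hΨeq : ∀ y, Ψ y = (k₃^2)⁻¹ * invΦ (k₃ * y) := by
    intro y
    have hgy : (fun x => k₃⁻¹ * Φ (k₃^2 * x)) ((k₃^2)⁻¹ * invΦ (k₃ * y)) = y := by
      simp only
      rw [← mul_assoc, mul_inv_cancel₀ (by positivity : k₃^2 ≠ 0), one_mul, hΦinv,
        ← mul_assoc, inv_mul_cancel₀ hk₃ne, one_mul]
    have hginj : Function.Injective (fun x => k₃⁻¹ * Φ (k₃^2 * x)) := by
      intro x1 x2 hx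
      simp only at hx
      have h1 := mul_left_cancel₀ (inv_ne_zero hk₃ne) hx
      have h2 := hinj h1
      exact mul_left_cancel₀ (by positivity : k₃^2 ≠ 0) h2
    rw [hΨ]
    exact hginj ((Function.invFun_eq (f := fun x => k₃⁻¹ * Φ (k₃^2 * x)) ⟨_, hgy⟩).trans hgy.symm)
  -- derivative of Ψ
  have hΨderiv : ∀ y : ℝ, y ≠ 0 →
      HasDerivAt Ψ ((k₃^2)⁻¹ * ((deriv Φ (invΦ (k₃ * y)))⁻¹ * k₃)) y := by
    intro y hy
    have h0 : HasDerivAt (fun t : ℝ => k₃ * t) k₃ y := by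
      simpa using (hasDerivAt_id y).const_mul k₃
    have h2 : HasDerivAt invΦ (deriv Φ (invΦ (k₃ * y)))⁻¹ (k₃ * y) :=
      hinv_deriv (k₃ * y) (mul_ne_zero hk₃ne hy)
    have h3 := (h2.comp y h0).const_mul ((k₃^2)⁻¹)
    have hfun : (fun t => (k₃^2)⁻¹ * (invΦ ∘ fun t : ℝ => k₃ * t) t) = Ψ := by
      funext t; rw [hΨeq t]; rfl
    rw [hfun] at h3
    exact h3
  -- facts about h
  have hIoo : ∀ τ, τ ∈ Set.Ioo a b → a < τ ∧ τ < b := fun τ hτ => ⟨hτ.1, hτ.2⟩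
  have hconth : ContinuousOn h (Set.Ioo a b) :=
    fun τ hτ => (hdiff τ hτ).continuousAt.continuousWithinAt
  have hder_pos : ∀ τ ∈ Set.Ioo a b, 0 < deriv h τ :=
    fun τ hτ => lt_of_lt_of_le (hineq τ hτ).2 (hineq τ hτ).1
  have hhmono : StrictMonoOn h (Set.Ioo a b) := by
    apply strictMonoOn_of_deriv_pos (convex_Ioo a b) hconth
    rw [interior_Ioo]
    exact hder_pos
  have hhne : ∀ τ ∈ Set.Ioo a b, h τ ≠ 0 := by
    intro τ hτ h0
    have := (hineq τ hτ).2
    rw [h0, mul_zero] at this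
    exact lt_irrefl 0 this
  have hαne : α ≠ 0 := by
    have hτ₀ : (a+b)/2 ∈ Set.Ioo a b := ⟨by linarith, by linarith⟩
    intro h0
    have := (hineq _ hτ₀).2
    rw [h0, zero_mul] at this
    exact lt_irrefl 0 this
  have hha : ∀ τ ∈ Set.Ioo a b, ha ≤ h τ := by
    intro τ hτ
    apply le_of_tendsto hlima
    filter_upwards [Ioo_mem_nhdsGT hτ.1] with s hs
    exact hhmono.monotoneOn ⟨hs.1, lt_trans hs.2 hτ.2⟩ hτ hs.2.le
  have hhb : ∀ τ ∈ Set.Ioo a b, h τ ≤ hb := by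
    intro τ hτ
    apply ge_of_tendsto hlimb
    filter_upwards [Ioo_mem_nhdsLT hτ.2] with s hs
    exact hhmono.monotoneOn hτ ⟨lt_trans hτ.1 hs.1, hs.2⟩ hs.1.le
  have hhab : ha < hb := by
    have h1 : (a + (a+b)/2)/2 ∈ Set.Ioo a b := ⟨by linarith, by linarith⟩
    have h2 : (a+b)/2 ∈ Set.Ioo a b := ⟨by linarith, by linarith⟩
    have h3 : h ((a + (a+b)/2)/2) < h ((a+b)/2) := hhmono h1 h2 (by linarith)
    exact lt_of_le_of_lt (hha _ h1) (lt_of_lt_of_le h3 (hhb _ h2))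
  -- X and endpoints
  set xa := invΦ (k₃ * ha) with hxadef
  set xb := invΦ (k₃ * hb) with hxbdef
  set X : ℝ → ℝ := fun τ => invΦ (k₃ * h τ) with hXdef
  have hxab : xa < xb := hinv_mono (by nlinarith)
  have hXmem : ∀ τ ∈ Set.Ioo a b, X τ ∈ Set.Icc xa xb := by
    intro τ hτ
    constructor
    · exact (hinv_mono.le_iff_le).mpr (by nlinarith [hha τ hτ])
    · exact (hinv_mono.le_iff_le).mpr (by nlinarith [hhb τ hτ])
  have hXne : ∀ τ ∈ Set.Ioo a b, X τ ≠ 0 :=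
    fun τ hτ => hinv_ne _ (mul_ne_zero hk₃ne (hhne τ hτ))
  have hΦX : ∀ τ, Φ (X τ) = k₃ * h τ := fun τ => hΦinv _
  have hXcont : ContinuousOn X (Set.Ioo a b) :=
    hinv_cont.comp_continuousOn (continuousOn_const.mul hconth)
  -- integrability of 1/Φ on [xa, xb]
  have hW : IntegrableOn (fun x => 1 / Φ x) (Set.Ioc xa xb) volume := by
    rcases lt_or_gt_of_ne hαne with hαneg | hαpos
    · -- h < 0, hb ≤ 0, xb ≤ 0
      have hhble : hb ≤ 0 := by
        apply le_of_tendsto hlimb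
        filter_upwards [Ioo_mem_nhdsLT hab] with s hs
        nlinarith [(hineq s hs).2]
      have hxble : xb ≤ 0 := by
        rw [← hinv0]
        exact hinv_mono.le_iff_le.mpr (by nlinarith)
      exact (dgf_integrableOn_Icc_neg hΦ xa).mono_set
        (fun x hx => ⟨le_of_lt hx.1, le_trans hx.2 hxble⟩)
    · -- h > 0, 0 ≤ ha, 0 ≤ xa
      have hhage : 0 ≤ ha := by
        apply ge_of_tendsto hlima
        filter_upwards [Ioo_mem_nhdsGT hab] with s hs
        nlinarith [(hineq s hs).2]
      have hxage : 0 ≤ xa := by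
        rw [← hinv0]
        exact hinv_mono.le_iff_le.mpr (by nlinarith)
      exact (dgf_integrableOn_Ioc hΦ xb).mono_set
        (fun x hx => ⟨lt_of_le_of_lt hxage hx.1, hx.2⟩)
  -- nonnegativity of the weighted integrand on [xa, xb]
  have hWpos : ∀ x ∈ Set.Icc xa xb, 0 ≤ (1/(k₃*α)) * (1 / Φ x) := by
    intro x hx
    rcases lt_or_gt_of_ne hαne with hαneg | hαpos
    · have hhble : hb ≤ 0 := by
        apply le_of_tendsto hlimb
        filter_upwards [Ioo_mem_nhdsLT hab] with s hs
        nlinarith [(hineq s hs).2]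
      have hxble : xb ≤ 0 := by
        rw [← hinv0]
        exact hinv_mono.le_iff_le.mpr (by nlinarith)
      rcases eq_or_lt_of_le (le_trans hx.2 hxble) with he | hlt
      · rw [he, hΦ0]
        simp
      · have hΦx : Φ x < 0 := by
          rw [← hΦ0]
          exact hΦ.strictMono hlt
        have h1 : 1 / Φ x < 0 := div_neg_of_pos_of_neg one_pos hΦx
        have h2 : 1/(k₃*α) < 0 := div_neg_of_pos_of_neg one_pos (by nlinarith)
        exact le_of_lt (mul_pos_of_neg_of_neg h2 h1)
    · have hhage : 0 ≤ ha := by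
        apply ge_of_tendsto hlima
        filter_upwards [Ioo_mem_nhdsGT hab] with s hs
        nlinarith [(hineq s hs).2]
      have hxage : 0 ≤ xa := by
        rw [← hinv0]
        exact hinv_mono.le_iff_le.mpr (by nlinarith)
      rcases eq_or_lt_of_le (le_trans hxage hx.1) with he | hlt
      · rw [← he, hΦ0]
        simp
      · have hΦx : 0 < Φ x := dgf_pos hΦ hlt
        have h2 : 0 < 1/(k₃*α) := by positivity
        positivity
  -- the antiderivative J
  set J : ℝ → ℝ := fun z => ∫ x in xa..z, 1 / Φ x with hJdef
  have hJint : ∀ z ∈ Set.Icc xa xb, IntervalIntegrable (fun x => 1 / Φ x) volume xa z := by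
    intro z hz
    rw [intervalIntegrable_iff_integrableOn_Ioc_of_le hz.1]
    exact hW.mono_set (Set.Ioc_subset_Ioc_right hz.2)
  have hJmono : ∀ z1 ∈ Set.Icc xa xb, ∀ z2 ∈ Set.Icc xa xb, z1 ≤ z2 →
      (1/(k₃*α)) * J z1 ≤ (1/(k₃*α)) * J z2 := by
    intro z1 hz1 z2 hz2 h12
    have hsub : J z2 - J z1 = ∫ x in z1..z2, 1 / Φ x :=
      intervalIntegral.integral_interval_sub_left (hJint z2 hz2) (hJint z1 hz1)
    have h0 : 0 ≤ ∫ x in z1..z2, (1/(k₃*α)) * (1 / Φ x) :=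
      intervalIntegral.integral_nonneg h12
        (fun u hu => hWpos u ⟨le_trans hz1.1 hu.1, le_trans hu.2 hz2.2⟩)
    rw [intervalIntegral.integral_const_mul, ← hsub, mul_sub] at h0
    linarith
  -- continuity helpers
  have hWcont : ContinuousOn (fun x => 1 / Φ x) ({(0:ℝ)}ᶜ) := by
    apply continuousOn_const.div hΦ.continuous.continuousOn
    intro x hx h0
    exact hx (hinj (h0.trans hΦ0.symm))
  have hXmaps : ∀ τ ∈ Set.Ioo a b, X τ ∈ ({(0:ℝ)}ᶜ : Set ℝ) := fun τ hτ => hXne τ hτ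
  have hΦXne : ∀ τ ∈ Set.Ioo a b, Φ (X τ) ≠ 0 := by
    intro τ hτ
    rw [hΦX τ]
    exact mul_ne_zero hk₃ne (hhne τ hτ)
  have hqpos : ∀ τ ∈ Set.Ioo a b, 0 < deriv Φ (X τ) :=
    fun τ hτ => hΦ.pos _ (hXne τ hτ)
  -- derivative of the composite
  have hFd : ∀ τ ∈ Set.Ioo a b, HasDerivAt (fun t => (1/(k₃*α)) * J (X t))
      ((1/(k₃*α)) * ((1 / Φ (X τ)) * ((deriv Φ (X τ))⁻¹ * (k₃ * deriv h τ)))) τ := by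
    intro τ hτ
    have h1 : HasDerivAt (fun t => k₃ * h t) (k₃ * deriv h τ) τ :=
      ((hdiff τ hτ).hasDerivAt).const_mul k₃
    have h2 : HasDerivAt invΦ (deriv Φ (X τ))⁻¹ (k₃ * h τ) :=
      hinv_deriv _ (mul_ne_zero hk₃ne (hhne τ hτ))
    have h3 : HasDerivAt J (1 / Φ (X τ)) (X τ) := by
      apply intervalIntegral.integral_hasDerivAt_right (hJint (X τ) (hXmem τ hτ))
      · exact ContinuousOn.stronglyMeasurableAtFilter isOpen_compl_singleton hWcont
          (X τ) (hXmaps τ hτ)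
      · exact continuousAt_const.div (hΦ.continuous.continuousAt) (hΦXne τ hτ)
    have h4 : HasDerivAt X ((deriv Φ (X τ))⁻¹ * (k₃ * deriv h τ)) τ := by have := h2.comp τ h1; exact this
    exact ((h3.comp τ h4).const_mul _)
  -- explicit integrands
  set gg : ℝ → ℝ := fun τ => (k₃^2)⁻¹ * ((deriv Φ (X τ))⁻¹ * k₃) with hggdef
  set Fd : ℝ → ℝ := fun τ =>
    (1/(k₃*α)) * ((1 / Φ (X τ)) * ((deriv Φ (X τ))⁻¹ * (k₃ * deriv h τ))) with hFddef
  have hgg_nonneg : ∀ τ ∈ Set.Ioo a b, 0 ≤ gg τ := by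
    intro τ hτ
    have := hqpos τ hτ
    positivity
  have hkey : ∀ τ ∈ Set.Ioo a b, gg τ ≤ Fd τ := by
    intro τ hτ
    have hq := hqpos τ hτ
    have h1 := (hineq τ hτ).1
    have h2 := (hineq τ hτ).2
    have hhτ := hhne τ hτ
    have hFdeq : Fd τ = gg τ * (deriv h τ / (α * h τ)) := by
      simp only [hFddef, hggdef, hΦX τ]
      have hαne' : α ≠ 0 := hαne
      field_simp
    rw [hFdeq]
    exact le_mul_of_one_le_right (hgg_nonneg τ hτ) ((one_le_div h2).mpr h1)
  -- continuity of gg and Fd on Ioo a b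
  have hdXcont : ContinuousOn (fun τ => deriv Φ (X τ)) (Set.Ioo a b) :=
    hΦ.cont'.comp hXcont hXmaps
  have hggcont : ContinuousOn gg (Set.Ioo a b) :=
    continuousOn_const.mul ((hdXcont.inv₀ (fun τ hτ => ne_of_gt (hqpos τ hτ))).mul
      continuousOn_const)
  have hFdcont : ContinuousOn Fd (Set.Ioo a b) := by
    apply continuousOn_const.mul
    apply ContinuousOn.mul
    · exact continuousOn_const.div (hΦ.continuous.comp_continuousOn hXcont) hΦXne
    · exact (hdXcont.inv₀ (fun τ hτ => ne_of_gt (hqpos τ hτ))).mul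
        (continuousOn_const.mul hcont)
  -- rewrite LHS
  have hgval : ∀ τ ∈ Set.Ioo a b, deriv Ψ (h τ) = gg τ :=
    fun τ hτ => (hΨderiv (h τ) (hhne τ hτ)).deriv
  rw [MeasureTheory.setIntegral_congr_fun measurableSet_Ioo hgval]
  have hJxa : J xa = 0 := intervalIntegral.integral_same
  have hxamem : xa ∈ Set.Icc xa xb := ⟨le_refl xa, hxab.le⟩
  have hxbmem : xb ∈ Set.Icc xa xb := ⟨hxab.le, le_refl xb⟩
  have hRHS0 : 0 ≤ (1/(k₃*α)) * J xb := by
    have := hJmono xa hxamem xb hxbmem hxab.le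
    rw [hJxa, mul_zero] at this
    exact this
  have hcompact : ∀ a' b', a < a' → a' ≤ b' → b' < b →
      ∫ τ in a'..b', gg τ ≤ (1/(k₃*α)) * J xb := by
    intro a' b' ha' hab' hb'
    have hIcc : Set.Icc a' b' ⊆ Set.Ioo a b :=
      fun t ht => ⟨lt_of_lt_of_le ha' ht.1, lt_of_le_of_lt ht.2 hb'⟩
    have hmema : a' ∈ Set.Ioo a b := ⟨ha', lt_of_le_of_lt hab' hb'⟩
    have hmemb : b' ∈ Set.Ioo a b := ⟨lt_of_lt_of_le ha' hab', hb'⟩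
    have huIcc : Set.uIcc a' b' = Set.Icc a' b' := Set.uIcc_of_le hab'
    have h1 : ∫ τ in a'..b', gg τ ≤ ∫ τ in a'..b', Fd τ := by
      apply intervalIntegral.integral_mono_on hab'
      · exact ContinuousOn.intervalIntegrable (by rw [huIcc]; exact hggcont.mono hIcc)
      · exact ContinuousOn.intervalIntegrable (by rw [huIcc]; exact hFdcont.mono hIcc)
      · exact fun τ hτ => hkey τ (hIcc hτ)
    have h2 : ∫ τ in a'..b', Fd τ = (1/(k₃*α)) * J (X b') - (1/(k₃*α)) * J (X a') := by
      apply intervalIntegral.integral_eq_sub_of_hasDerivAt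
      · intro τ hτ
        rw [huIcc] at hτ
        exact hFd τ (hIcc hτ)
      · exact ContinuousOn.intervalIntegrable (by rw [huIcc]; exact hFdcont.mono hIcc)
    have h3 : (1/(k₃*α)) * J (X b') ≤ (1/(k₃*α)) * J xb :=
      hJmono _ (hXmem b' hmemb) xb hxbmem (hXmem b' hmemb).2
    have h4 : (1/(k₃*α)) * J xa ≤ (1/(k₃*α)) * J (X a') :=
      hJmono xa hxamem _ (hXmem a' hmema) (hXmem a' hmema).1
    rw [hJxa, mul_zero] at h4
    linarith
  show (∫ τ in Set.Ioo a b, gg τ) ≤ (1/(k₃*α)) * J xb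
  by_cases hgi : IntegrableOn gg (Set.Ioo a b) volume
  · set seq : ℕ → Set ℝ := fun n => Set.Icc (a + (b-a)/(n+3)) (b - (b-a)/(n+3)) with hseqdef
    have hd : ∀ n : ℕ, 0 < (b-a)/((n:ℝ)+3) := by
      intro n
      have : (0:ℝ) < b - a := by linarith
      positivity
    have hd2 : ∀ n : ℕ, (b-a)/((n:ℝ)+3) ≤ (b-a)/3 := by
      intro n
      have hba : (0:ℝ) ≤ b - a := by linarith
      have h3 : (3:ℝ) ≤ (n:ℝ)+3 := by linarith [(Nat.cast_nonneg n : (0:ℝ) ≤ n)]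
      gcongr
    have hsm : ∀ n : ℕ, MeasurableSet (seq n) := fun n => measurableSet_Icc
    have hmono_seq : Monotone seq := by
      intro n m hnm
      have hmn : ((n:ℝ)+3) ≤ ((m:ℝ)+3) := by
        have : (n:ℝ) ≤ (m:ℝ) := Nat.cast_le.mpr hnm
        linarith
      have hba : (0:ℝ) ≤ b - a := by linarith
      have hkey : (b-a)/((m:ℝ)+3) ≤ (b-a)/((n:ℝ)+3) := by gcongr
      exact Set.Icc_subset_Icc (by linarith) (by linarith)
    have hunion : (⋃ n, seq n) = Set.Ioo a b := by
      ext t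
      simp only [hseqdef, Set.mem_iUnion, Set.mem_Icc, Set.mem_Ioo]
      constructor
      · rintro ⟨n, h1, h2⟩
        exact ⟨lt_of_lt_of_le (by nlinarith [hd n]) h1, lt_of_le_of_lt h2 (by nlinarith [hd n])⟩
      · rintro ⟨h1, h2⟩
        obtain ⟨n, hn⟩ := exists_nat_gt (max ((b-a)/(t-a)) ((b-a)/(b-t)))
        refine ⟨n, ?_, ?_⟩
        · have hx1 : (b-a)/(t-a) < (n:ℝ)+3 :=
            lt_of_le_of_lt (le_max_left _ _) (by linarith)
          have hx2 : (b-a)/((n:ℝ)+3) ≤ t - a := by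
            rw [div_le_iff₀ (by positivity)]
            rw [div_lt_iff₀ (by linarith : (0:ℝ) < t - a)] at hx1
            nlinarith
          linarith
        · have hx1 : (b-a)/(b-t) < (n:ℝ)+3 :=
            lt_of_le_of_lt (le_max_right _ _) (by linarith)
          have hx2 : (b-a)/((n:ℝ)+3) ≤ b - t := by
            rw [div_le_iff₀ (by positivity)]
            rw [div_lt_iff₀ (by linarith : (0:ℝ) < b - t)] at hx1
            nlinarith
          linarith
    have htend := MeasureTheory.tendsto_setIntegral_of_monotone hsm hmono_seq
      (by rw [hunion]; exact hgi)
    rw [hunion] at htend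
    apply le_of_tendsto htend
    apply Eventually.of_forall
    intro n
    have hle : a + (b-a)/((n:ℝ)+3) ≤ b - (b-a)/((n:ℝ)+3) := by
      have := hd2 n
      linarith
    have heq : ∫ τ in seq n, gg τ = ∫ τ in (a + (b-a)/((n:ℝ)+3))..(b - (b-a)/((n:ℝ)+3)), gg τ := by
      rw [intervalIntegral.integral_of_le hle]
      exact MeasureTheory.integral_Icc_eq_integral_Ioc
    rw [heq]
    exact hcompact _ _ (by nlinarith [hd n]) hle (by nlinarith [hd n])
  · rw [MeasureTheory.integral_undef hgi]
    exact hRHS0
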